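/- Let B = (O, Ω, R, Ω∖T, T) be a bud generating system whose set of initial colors is I = Ω∖T. Then the collection O_{Ω,B} with O_{Ω,B}(n) = { x = (c, T, c̄) ∈ B_Ω(O)(n) : 1_c →_B x, c ∈ Ω∖T, c̄ ∈ (Ω∖T)^n } contains the colored units and is closed under the colored insertion operations of the bud operad B_Ω(O); hence O_{Ω,B} is a colored operad with color set Ω∖T. -/

import Mathlib

/-- An operad in the category of sets, presented via insertion operations `∘ᵢ`,
with a unit and the standard associativity/commutation axioms. -/
structure Operad where
  Ops : Type
  arity : Ops → ℕ
  unit : Ops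
  arity_unit : arity unit = 1
  ins : Ops → ℕ → Ops → Ops
  arity_ins : ∀ x i y, i < arity x → arity (ins x i y) = arity x + arity y - 1
  unit_ins : ∀ x, ins unit 0 x = x
  ins_unit : ∀ x i, i < arity x → ins x i unit = x
  ins_assoc : ∀ x y z i j, j ≤ i → i < j + arity y →
    ins (ins x j y) i z = ins x j (ins y (i - j) z)
  ins_comm : ∀ x y z i j, i < j → j < arity x →
    ins (ins x j y) i z = ins (ins x i z) (j + arity z - 1) y

/-- An element `(c, T, c̄)` of the bud operad `B_Ω(O)`: an operation `T` of `O`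
together with an output color `c` and a list `c̄` of input colors. -/
structure BudElem (O : Operad) (Ω : Type) where
  out : Ω
  op : O.Ops
  ins : List Ω
  len_eq : ins.length = O.arity op

/-- The colored unit `1_c = (c, 1, c)` of the bud operad. -/
def budUnit (O : Operad) (Ω : Type) (c : Ω) : BudElem O Ω :=
  ⟨c, O.unit, [c], by simp [O.arity_unit]⟩

/-- Colored insertion in the bud operad: `(c,T,c̄) ∘ᵢ (c',T',c̄')` is defined
exactly when `c̄ᵢ = c'`. -/
def budInsert {O : Operad} {Ω : Type} [DecidableEq Ω] (x : BudElem O Ω) (i : ℕ)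
    (r : BudElem O Ω) : Option (BudElem O Ω) :=
  if h : i < O.arity x.op ∧ x.ins[i]? = some r.out then
    some { out := x.out
           op := O.ins x.op i r.op
           ins := x.ins.take i ++ r.ins ++ x.ins.drop (i + 1)
           len_eq := by
             have e1 := x.len_eq
             have e2 := r.len_eq
             have e3 := O.arity_ins x.op i r.op h.1
             simp only [List.length_append, List.length_take, List.length_drop, e3]
             omega }
  else none

/-- Derivability `y →_B x` in a bud generating system with rule set `R`:
`x` is obtained from `y` by a finite sequence of insertions of rules of `R`. -/
inductive BudDerives {O : Operad} {Ω : Type} [DecidableEq Ω] (R : Set (BudElem O Ω)) :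
    BudElem O Ω → BudElem O Ω → Prop where
  | refl (x : BudElem O Ω) : BudDerives R x x
  | step {x y z : BudElem O Ω} (i : ℕ) (r : BudElem O Ω) :
      BudDerives R x y → r ∈ R → budInsert y i r = some z → BudDerives R x z

/-- The colored operad `O_{Ω,B}` determined by a bud generating system with
initial colors `I = Ω ∖ T`: elements derivable from a colored unit, with output
and input colors all nonterminal. -/
def OpsB {O : Operad} {Ω : Type} [DecidableEq Ω] (R : Set (BudElem O Ω)) (Term : Set Ω) :
    Set (BudElem O Ω) :=
  { x | BudDerives R (budUnit O Ω x.out) x ∧ x.out ∉ Term ∧ ∀ c ∈ x.ins, c ∉ Term }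

/-- The language `L(B)`: elements derivable from a colored unit `1_c`, `c ∈ I = Ω ∖ T`,
with all input colors terminal. -/
def BudLang {O : Operad} {Ω : Type} [DecidableEq Ω] (R : Set (BudElem O Ω)) (Term : Set Ω) :
    Set (BudElem O Ω) :=
  { x | BudDerives R (budUnit O Ω x.out) x ∧ x.out ∉ Term ∧ ∀ c ∈ x.ins, c ∈ Term }

/-- Full operadic composition `γ(x; a₁, …, aₙ)` in the bud operad, performed as the
sequence of insertions `(⋯(x ∘ₙ aₙ) ∘_{n-1} a_{n-1} ⋯ ) ∘₁ a₁`. -/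
def budComp {O : Operad} {Ω : Type} [DecidableEq Ω] (x : BudElem O Ω)
    (as : List (BudElem O Ω)) : Option (BudElem O Ω) :=
  (as.zipIdx.map Prod.swap).reverse.foldlM (fun acc p => budInsert acc p.1 p.2) x

/-- The projection `℘_in(c,T,c̄) = (T,c̄)` forgetting the output color. -/
def pIn {O : Operad} {Ω : Type} (x : BudElem O Ω) : O.Ops × List Ω := (x.op, x.ins)

/-- Application of an (uncolored) operation `S` of `O` to a list of pairs
`(Tⱼ, c̄ⱼ)`: operadic composition of the operations together with concatenation
of the color lists. -/
def opComp (O : Operad) {Ω : Type} (S : O.Ops) (as : List (O.Ops × List Ω)) :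
    O.Ops × List Ω :=
  (((as.map Prod.fst).zipIdx.map Prod.swap).reverse.foldl (fun acc p => O.ins acc p.1 p.2) S,
   (as.map Prod.snd).flatten)

section Aux
set_option linter.unusedSectionVars false
variable {O : Operad} {Ω : Type} [DecidableEq Ω] {R : Set (BudElem O Ω)}

theorem BudElem.ext' {x y : BudElem O Ω} (h1 : x.out = y.out) (h2 : x.op = y.op)
    (h3 : x.ins = y.ins) : x = y := by
  cases x; cases y; simp_all

theorem budInsert_cond {x r z : BudElem O Ω} {i : ℕ} (h : budInsert x i r = some z) :
    i < O.arity x.op ∧ x.ins[i]? = some r.out := by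
  unfold budInsert at h
  split at h
  · assumption
  · cases h

theorem budInsert_eq {x r z : BudElem O Ω} {i : ℕ} (h : budInsert x i r = some z) :
    z.out = x.out ∧ z.op = O.ins x.op i r.op ∧
      z.ins = x.ins.take i ++ r.ins ++ x.ins.drop (i + 1) := by
  unfold budInsert at h
  split at h
  · cases h; exact ⟨rfl, rfl, rfl⟩
  · cases h

theorem budInsert_unit {x : BudElem O Ω} {i : ℕ} {c : Ω} (hi : i < O.arity x.op)
    (hc : x.ins[i]? = some c) : budInsert x i (budUnit O Ω c) = some x := by
  have hlen : x.ins.length = O.arity x.op := x.len_eq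
  have hil : i < x.ins.length := by omega
  have hget : x.ins[i] = c := by
    rw [List.getElem?_eq_getElem hil] at hc
    exact (Option.some.injEq _ _).mp hc
  have hcond : i < O.arity x.op ∧ x.ins[i]? = some (budUnit O Ω c).out := ⟨hi, hc⟩
  unfold budInsert
  rw [dif_pos hcond]
  congr 1
  refine (BudElem.ext' ?_ ?_ ?_).symm
  · rfl
  · exact (O.ins_unit x.op i hi).symm
  · show x.ins = x.ins.take i ++ [c] ++ x.ins.drop (i + 1)
    rw [List.append_assoc]
    have h2 : [c] ++ x.ins.drop (i + 1) = x.ins.drop i := by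
      rw [List.drop_eq_getElem_cons hil, hget]; rfl
    rw [h2, List.take_append_drop]

theorem take_app {A B C : List Ω} {i j : ℕ} (hA : A.length = i) (hj : j < B.length) :
    (A ++ B ++ C).take (i + j) = A ++ B.take j := by
  subst hA
  simp [List.take_append]
  rw [show j - B.length = 0 by omega]
  simp

theorem drop_app {A B C : List Ω} {i j : ℕ} (hA : A.length = i) (hj : j < B.length) :
    (A ++ B ++ C).drop (i + j + 1) = B.drop (j + 1) ++ C := by
  subst hA
  simp [List.drop_append]
  rw [List.drop_of_length_le (by omega), show A.length + j + 1 - A.length = j + 1 by omega,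
    show j + 1 - B.length = 0 by omega]
  simp

theorem budInsert_assoc {x y r w y' : BudElem O Ω} {i j : ℕ}
    (h1 : budInsert x i y = some w) (h2 : budInsert y j r = some y') :
    budInsert x i y' = budInsert w (i + j) r := by
  obtain ⟨hw_out, hw_op, hw_ins⟩ := budInsert_eq h1
  obtain ⟨hy'_out, hy'_op, hy'_ins⟩ := budInsert_eq h2
  obtain ⟨hix, hcx⟩ := budInsert_cond h1
  obtain ⟨hjy, hcy⟩ := budInsert_cond h2
  have hlx : x.ins.length = O.arity x.op := x.len_eq
  have hly : y.ins.length = O.arity y.op := y.len_eq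
  have htake_len : (x.ins.take i).length = i := by
    rw [List.length_take]; omega
  have hjl : j < y.ins.length := by omega
  have harw : O.arity w.op = O.arity x.op + O.arity y.op - 1 := by
    rw [hw_op]; exact O.arity_ins _ _ _ hix
  have hiw : i + j < O.arity w.op := by omega
  have hcw : w.ins[i + j]? = some r.out := by
    rw [hw_ins, List.append_assoc, List.getElem?_append_right (by omega),
      htake_len, show i + j - i = j by omega, List.getElem?_append_left (by omega)]
    exact hcy
  have hcy' : x.ins[i]? = some y'.out := by rw [hy'_out]; exact hcx
  unfold budInsert
  rw [dif_pos ⟨hix, hcy'⟩, dif_pos ⟨hiw, hcw⟩]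
  congr 1
  refine BudElem.ext' (by rw [hw_out]) ?_ ?_
  · show O.ins x.op i y'.op = O.ins w.op (i + j) r.op
    rw [hy'_op, hw_op]
    have h3 := O.ins_assoc x.op y.op r.op (i + j) i (by omega) (by omega)
    rw [show i + j - i = j by omega] at h3
    exact h3.symm
  · show x.ins.take i ++ y'.ins ++ x.ins.drop (i + 1)
      = w.ins.take (i + j) ++ r.ins ++ w.ins.drop (i + j + 1)
    rw [hy'_ins, hw_ins, take_app htake_len hjl, drop_app htake_len hjl]
    simp [List.append_assoc]

theorem BudDerives.trans {a b c : BudElem O Ω} (h1 : BudDerives R a b)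
    (h2 : BudDerives R b c) : BudDerives R a c := by
  induction h2 with
  | refl => exact h1
  | step i r _ hr hins ih => exact BudDerives.step i r ih hr hins

theorem budDerives_out {a b : BudElem O Ω} (h : BudDerives R a b) : b.out = a.out := by
  induction h with
  | refl => rfl
  | step i r _ hr hins ih => rw [(budInsert_eq hins).1, ih]

theorem budDerives_insert {u y : BudElem O Ω} (h : BudDerives R u y)
    (hu : u = budUnit O Ω y.out) :
    ∀ x i z, budInsert x i y = some z → BudDerives R x z := by
  induction h with
  | refl =>
    intro x i z hz
    obtain ⟨hi, hc⟩ := budInsert_cond hz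
    rw [hu] at hz
    rw [budInsert_unit hi hc] at hz
    cases hz
    exact BudDerives.refl x
  | @step y1 y2 j r hder hr hins ih =>
    intro x i z hz
    have hout : y2.out = y1.out := (budInsert_eq hins).1
    obtain ⟨hi, hc⟩ := budInsert_cond hz
    -- insert y1 into x at i
    have hcy1 : x.ins[i]? = some y1.out := by rw [← hout]; exact hc
    obtain ⟨w, hw⟩ : ∃ w, budInsert x i y1 = some w := by
      unfold budInsert
      rw [dif_pos ⟨hi, hcy1⟩]
      exact ⟨_, rfl⟩
    have hassoc := budInsert_assoc hw hins
    rw [hz] at hassoc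
    have hder_w : BudDerives R x w := ih (by rw [hu, hout]) x i w hw
    exact BudDerives.step (i + j) r hder_w hr hassoc.symm

end Aux

/-- For a bud generating system `B = (O, Ω, R, Ω∖T, T)` with initial
colors `I = Ω∖T`, the collection `O_{Ω,B}` of all `x = (c,T,c̄) ∈ B_Ω(O)` with
`1_c →_B x`, `c ∈ Ω∖T`, `c̄ ∈ (Ω∖T)ⁿ` contains the colored units and is closed
under the colored insertion operations of the bud operad `B_Ω(O)`; hence it is a
colored operad with color set `Ω∖T`. -/
theorem statement0 (O : Operad) (Ω : Type) [Finite Ω] [DecidableEq Ω]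
    (R : Set (BudElem O Ω)) (hR : R.Finite) (Term : Set Ω) :
    (∀ c ∉ Term, budUnit O Ω c ∈ OpsB R Term) ∧
    (∀ x ∈ OpsB R Term, ∀ y ∈ OpsB R Term, ∀ (i : ℕ) (z : BudElem O Ω),
        budInsert x i y = some z → z ∈ OpsB R Term) := by
  constructor
  · intro c hc
    refine ⟨BudDerives.refl _, hc, ?_⟩
    intro c' hc'
    simp only [budUnit, List.mem_singleton] at hc'
    rw [hc']; exact hc
  · rintro x ⟨dx, hxo, hxi⟩ y ⟨dy, hyo, hyi⟩ i z hz
    obtain ⟨hz_out, hz_op, hz_ins⟩ := budInsert_eq hz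
    refine ⟨?_, ?_, ?_⟩
    · rw [hz_out]
      exact BudDerives.trans dx (budDerives_insert dy rfl x i z hz)
    · rw [hz_out]; exact hxo
    · intro c hc
      rw [hz_ins] at hc
      simp only [List.mem_append] at hc
      rcases hc with (hc | hc) | hc
      · exact hxi c (List.take_subset _ _ hc)
      · exact hyi c hc
      · exact hxi c (List.drop_subset _ _ hc)
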